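/- For positive definite n×n complex matrices A, B and any real y, Re Tr(A^{1/4+iy} B^{1/4+iy} A^{3/4-iy} B^{3/4-iy}) ≤ Tr(AB). -/

import Mathlib

open Matrix Complex
open scoped ComplexOrder

/-- Real power of a (Hermitian, intended positive semidefinite) matrix via the spectral
decomposition; junk value `A` if `A` is not Hermitian. -/
noncomputable def Matrix.mpow {n : ℕ} (A : Matrix (Fin n) (Fin n) ℂ) (t : ℝ) :
    Matrix (Fin n) (Fin n) ℂ :=
  if hA : A.IsHermitian then
    (hA.eigenvectorUnitary : Matrix (Fin n) (Fin n) ℂ) *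
      Matrix.diagonal (fun i => ((hA.eigenvalues i ^ t : ℝ) : ℂ)) *
      (star (hA.eigenvectorUnitary : Matrix (Fin n) (Fin n) ℂ))
  else A

/-- Complex power `A ^ z = exp (z log A)` of a (Hermitian, intended positive definite) matrix via
the spectral decomposition; junk value `A` if `A` is not Hermitian. -/
noncomputable def Matrix.mcpow {n : ℕ} (A : Matrix (Fin n) (Fin n) ℂ) (z : ℂ) :
    Matrix (Fin n) (Fin n) ℂ :=
  if hA : A.IsHermitian then
    (hA.eigenvectorUnitary : Matrix (Fin n) (Fin n) ℂ) *
      Matrix.diagonal (fun i => Complex.exp (z * Real.log (hA.eigenvalues i))) *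
      (star (hA.eigenvectorUnitary : Matrix (Fin n) (Fin n) ℂ))
  else A

/-- Schatten `r`-norm of a matrix: `(∑ sᵢ(X)^r)^(1/r)`, where the `sᵢ(X)` are the singular
values, i.e. the square roots of the eigenvalues of `Xᴴ * X`. -/
noncomputable def Matrix.schatten {n : ℕ} (r : ℝ) (X : Matrix (Fin n) (Fin n) ℂ) : ℝ :=
  (∑ i, ((Matrix.posSemidef_conjTranspose_mul_self X).1.eigenvalues i) ^ (r / 2)) ^ (1 / r)

/-- Frobenius (Hilbert–Schmidt) norm of a matrix. -/
noncomputable def Matrix.frob {n : ℕ} (X : Matrix (Fin n) (Fin n) ℂ) : ℝ :=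
  Real.sqrt (Xᴴ * X).trace.re

/-- Operator (spectral) norm of a matrix. -/
noncomputable def Matrix.opNorm {n : ℕ} (X : Matrix (Fin n) (Fin n) ℂ) : ℝ :=
  ‖Matrix.toEuclideanCLM (𝕜 := ℂ) X‖

/-- Smallest singular value of a matrix. -/
noncomputable def Matrix.sMin {n : ℕ} (X : Matrix (Fin n) (Fin n) ℂ) : ℝ :=
  ⨅ i, Real.sqrt ((Matrix.posSemidef_conjTranspose_mul_self X).1.eigenvalues i)

namespace MyAux
variable {n : ℕ} {A : Matrix (Fin n) (Fin n) ℂ}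

lemma mcpow_eq (hA : A.IsHermitian) (z : ℂ) :
    A.mcpow z = (hA.eigenvectorUnitary : Matrix (Fin n) (Fin n) ℂ) *
      Matrix.diagonal (fun i => Complex.exp (z * Real.log (hA.eigenvalues i))) *
      (star (hA.eigenvectorUnitary : Matrix (Fin n) (Fin n) ℂ)) := by
  rw [Matrix.mcpow, dif_pos hA]

lemma mcpow_mul_mcpow (hA : A.IsHermitian) (z w : ℂ) :
    A.mcpow z * A.mcpow w = A.mcpow (z + w) := by
  set U := (hA.eigenvectorUnitary : Matrix (Fin n) (Fin n) ℂ) with hU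
  have h1 : star U * U = 1 := Matrix.mem_unitaryGroup_iff'.mp hA.eigenvectorUnitary.2
  rw [mcpow_eq hA, mcpow_eq hA, mcpow_eq hA]
  calc U * Matrix.diagonal (fun i => Complex.exp (z * Real.log (hA.eigenvalues i))) * star U *
        (U * Matrix.diagonal (fun i => Complex.exp (w * Real.log (hA.eigenvalues i))) * star U)
      = U * (Matrix.diagonal (fun i => Complex.exp (z * Real.log (hA.eigenvalues i))) *
          ((star U * U) *
          (Matrix.diagonal (fun i => Complex.exp (w * Real.log (hA.eigenvalues i))) * star U))) := by
        simp only [Matrix.mul_assoc]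
    _ = U * Matrix.diagonal (fun i => Complex.exp ((z + w) * Real.log (hA.eigenvalues i))) * star U := by
        rw [h1, one_mul, ← Matrix.mul_assoc, ← Matrix.mul_assoc, Matrix.mul_assoc U,
          Matrix.diagonal_mul_diagonal]
        have he : (fun i => Complex.exp (z * Real.log (hA.eigenvalues i)) *
            Complex.exp (w * Real.log (hA.eigenvalues i))) =
            fun i => Complex.exp ((z + w) * Real.log (hA.eigenvalues i)) := by
          funext i
          rw [← Complex.exp_add]
          ring_nf
        rw [he, Matrix.mul_assoc]

lemma mcpow_conjTranspose (hA : A.IsHermitian) (z : ℂ) :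
    (A.mcpow z)ᴴ = A.mcpow (starRingEnd ℂ z) := by
  set U := (hA.eigenvectorUnitary : Matrix (Fin n) (Fin n) ℂ) with hU
  rw [mcpow_eq hA, mcpow_eq hA]
  rw [Matrix.conjTranspose_mul, Matrix.conjTranspose_mul, Matrix.diagonal_conjTranspose]
  have h1 : (star U)ᴴ = U := by
    rw [Matrix.star_eq_conjTranspose, Matrix.conjTranspose_conjTranspose]
  have h2 : Uᴴ = star U := (Matrix.star_eq_conjTranspose U).symm
  rw [h1, h2, ← Matrix.mul_assoc]
  have he : (star fun i => Complex.exp (z * Real.log (hA.eigenvalues i))) =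
      fun i => Complex.exp (starRingEnd ℂ z * Real.log (hA.eigenvalues i)) := by
    funext i
    rw [Pi.star_apply, Complex.star_def, ← Complex.exp_conj, _root_.map_mul, Complex.conj_ofReal]
  rw [he]

lemma mcpow_one (hA : A.PosDef) : A.mcpow 1 = A := by
  rw [mcpow_eq hA.1]
  have he : (fun i => Complex.exp ((1 : ℂ) * Real.log (hA.1.eigenvalues i))) =
      fun i => (hA.1.eigenvalues i : ℂ) := by
    funext i
    rw [one_mul, ← Complex.ofReal_exp, Real.exp_log (hA.eigenvalues_pos i)]
  rw [he]
  exact (hA.1.spectral_theorem).symm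

lemma trace_conjTranspose_mul (M N : Matrix (Fin n) (Fin n) ℂ) :
    (Mᴴ * N).trace = ∑ p : Fin n × Fin n, (starRingEnd ℂ) (M p.2 p.1) * N p.2 p.1 := by
  rw [← Finset.univ_product_univ, Finset.sum_product]
  simp [Matrix.trace, Matrix.mul_apply, Matrix.conjTranspose_apply, Matrix.diag]

lemma trace_re_eq (M : Matrix (Fin n) (Fin n) ℂ) :
    (Mᴴ * M).trace.re = ∑ p : Fin n × Fin n, ‖M p.2 p.1‖ ^ 2 := by
  rw [trace_conjTranspose_mul, Complex.re_sum]
  congr 1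
  funext p
  rw [Complex.conj_mul', ← Complex.ofReal_pow, Complex.ofReal_re]

lemma trace_re_nonneg (M : Matrix (Fin n) (Fin n) ℂ) : 0 ≤ (Mᴴ * M).trace.re := by
  rw [trace_re_eq]
  exact Finset.sum_nonneg fun p _ => sq_nonneg _

lemma frob_sq (M : Matrix (Fin n) (Fin n) ℂ) : M.frob ^ 2 = (Mᴴ * M).trace.re := by
  rw [Matrix.frob, Real.sq_sqrt (trace_re_nonneg M)]

lemma frob_nonneg (M : Matrix (Fin n) (Fin n) ℂ) : 0 ≤ M.frob := Real.sqrt_nonneg _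

lemma cs (M N : Matrix (Fin n) (Fin n) ℂ) :
    ‖(Mᴴ * N).trace‖ ≤ M.frob * N.frob := by
  rw [trace_conjTranspose_mul]
  calc ‖∑ p : Fin n × Fin n, (starRingEnd ℂ) (M p.2 p.1) * N p.2 p.1‖
      ≤ ∑ p : Fin n × Fin n, ‖(starRingEnd ℂ) (M p.2 p.1) * N p.2 p.1‖ := by
        exact norm_sum_le _ _
    _ = ∑ p : Fin n × Fin n, ‖M p.2 p.1‖ * ‖N p.2 p.1‖ := by
        congr 1
        funext p
        rw [norm_mul, Complex.norm_conj]
    _ ≤ M.frob * N.frob := by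
        have h := Finset.sum_mul_sq_le_sq_mul_sq Finset.univ
          (fun p : Fin n × Fin n => ‖M p.2 p.1‖) (fun p => ‖N p.2 p.1‖)
        have h2 : (∑ p : Fin n × Fin n, ‖M p.2 p.1‖ * ‖N p.2 p.1‖) ^ 2 ≤
            (M.frob * N.frob) ^ 2 := by
          rw [mul_pow, frob_sq, frob_sq, trace_re_eq, trace_re_eq]
          exact h
        have hs : 0 ≤ ∑ p : Fin n × Fin n, ‖M p.2 p.1‖ * ‖N p.2 p.1‖ :=
          Finset.sum_nonneg fun p _ => mul_nonneg (norm_nonneg _) (norm_nonneg _)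
        have hfr : 0 ≤ M.frob * N.frob := mul_nonneg (frob_nonneg M) (frob_nonneg N)
        nlinarith

lemma cs_re (M N : Matrix (Fin n) (Fin n) ℂ) :
    (Mᴴ * N).trace.re ≤ M.frob * N.frob :=
  le_trans (Complex.re_le_norm _) (cs M N)

lemma frob_conjTranspose (M : Matrix (Fin n) (Fin n) ℂ) : Mᴴ.frob = M.frob := by
  have h1 : Mᴴ.frob ^ 2 = M.frob ^ 2 := by
    rw [frob_sq, frob_sq, Matrix.conjTranspose_conjTranspose, Matrix.trace_mul_comm]
  have := congrArg Real.sqrt h1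
  rwa [Real.sqrt_sq (frob_nonneg _), Real.sqrt_sq (frob_nonneg _)] at this

lemma pow_pow_assoc (hA : A.IsHermitian) (z w : ℂ) (C : Matrix (Fin n) (Fin n) ℂ) :
    A.mcpow z * (A.mcpow w * C) = A.mcpow (z + w) * C := by
  rw [← Matrix.mul_assoc, mcpow_mul_mcpow hA]

end MyAux

open MyAux in
theorem stmt2 {n : ℕ} {A B : Matrix (Fin n) (Fin n) ℂ}
    (hA : A.PosDef) (hB : B.PosDef) (y : ℝ) :
    (A.mcpow (1 / 4 + (y : ℂ) * Complex.I) * B.mcpow (1 / 4 + (y : ℂ) * Complex.I) *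
      A.mcpow (3 / 4 - (y : ℂ) * Complex.I) * B.mcpow (3 / 4 - (y : ℂ) * Complex.I)).trace.re ≤
      (A * B).trace.re := by
  have hAh := hA.1
  have hBh := hB.1
  set a : ℂ := 1 / 4 + (y : ℂ) * Complex.I with ha
  set c : ℂ := 1 / 4 - (y : ℂ) * Complex.I with hc
  set b : ℂ := 3 / 4 - (y : ℂ) * Complex.I with hb
  set h : ℂ := 1 / 2 with hh
  -- conjugation facts
  have hconj_a : starRingEnd ℂ a = c := by
    simp [ha, hc, map_add, map_sub, _root_.map_mul, map_div₀, _root_.map_one, map_ofNat,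
      Complex.conj_I, Complex.conj_ofReal]
    try ring
  have hconj_c : starRingEnd ℂ c = a := by
    simp [ha, hc, map_add, map_sub, _root_.map_mul, map_div₀, _root_.map_one, map_ofNat,
      Complex.conj_I, Complex.conj_ofReal]
    try ring
  have hconj_h : starRingEnd ℂ h = h := by
    simp [hh, map_div₀, _root_.map_one, map_ofNat]
  -- exponent arithmetic
  have eac : a + c = h := by rw [ha, hc, hh]; ring
  have eca : c + a = h := by rw [ha, hc, hh]; ring
  have ehh : h + h = 1 := by rw [hh]; ring
  have ech : c + h = b := by rw [hc, hh, hb]; ring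
  have ehc : h + c = b := by rw [hc, hh, hb]; ring
  -- matrices
  set X := B.mcpow c * A.mcpow a with hX
  set Y := B.mcpow a * A.mcpow c with hY
  set W := A.mcpow h * B.mcpow h with hW
  set t := (A * B).trace.re with ht
  -- adjoints
  have hXadj : Xᴴ = A.mcpow c * B.mcpow a := by
    rw [hX, Matrix.conjTranspose_mul, mcpow_conjTranspose hAh, mcpow_conjTranspose hBh,
      hconj_a, hconj_c]
  have hYadj : Yᴴ = A.mcpow a * B.mcpow c := by
    rw [hY, Matrix.conjTranspose_mul, mcpow_conjTranspose hAh, mcpow_conjTranspose hBh,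
      hconj_a, hconj_c]
  have hWadj : Wᴴ = B.mcpow h * A.mcpow h := by
    rw [hW, Matrix.conjTranspose_mul, mcpow_conjTranspose hAh, mcpow_conjTranspose hBh, hconj_h]
  -- W.frob ^ 2 = t
  have hWfrob : W.frob ^ 2 = t := by
    rw [frob_sq, hWadj, hW, ht]
    have : B.mcpow h * A.mcpow h * (A.mcpow h * B.mcpow h) =
        B.mcpow h * (A * B.mcpow h) := by
      simp only [Matrix.mul_assoc]
      rw [pow_pow_assoc hAh, ehh, mcpow_one hA]
    rw [this, Matrix.trace_mul_comm, Matrix.mul_assoc, mcpow_mul_mcpow hBh, ehh, mcpow_one hB]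
  have htnn : 0 ≤ t := hWfrob ▸ sq_nonneg _
  -- X^H X
  have hXX : Xᴴ * X = A.mcpow c * (B.mcpow h * A.mcpow a) := by
    rw [hXadj, hX]
    simp only [Matrix.mul_assoc]
    rw [pow_pow_assoc hBh, eac]
  have hXXherm : (Xᴴ * X)ᴴ = Xᴴ * X := by
    rw [Matrix.conjTranspose_mul, Matrix.conjTranspose_conjTranspose]
  have hXXfrob : (Xᴴ * X).frob ^ 2 ≤ t := by
    rw [frob_sq, hXXherm]
    have hsq : (Xᴴ * X) * (Xᴴ * X) =
        A.mcpow c * (B.mcpow h * (A.mcpow h * (B.mcpow h * A.mcpow a))) := by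
      rw [hXX]
      simp only [Matrix.mul_assoc]
      rw [pow_pow_assoc hAh, eac]
    rw [hsq, Matrix.trace_mul_comm]
    have hre : B.mcpow h * (A.mcpow h * (B.mcpow h * A.mcpow a)) * A.mcpow c =
        Wᴴ * Wᴴ := by
      rw [hWadj]
      simp only [Matrix.mul_assoc]
      rw [mcpow_mul_mcpow hAh, eac]
    rw [hre]
    calc (Wᴴ * Wᴴ).trace.re ≤ W.frob * Wᴴ.frob := cs_re W Wᴴ
      _ = t := by rw [frob_conjTranspose, ← pow_two, hWfrob]
  -- Y Y^H
  have hYY : Y * Yᴴ = B.mcpow a * (A.mcpow h * B.mcpow c) := by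
    rw [hYadj, hY]
    simp only [Matrix.mul_assoc]
    rw [pow_pow_assoc hAh, eca]
  have hYYherm : (Y * Yᴴ)ᴴ = Y * Yᴴ := by
    rw [Matrix.conjTranspose_mul, Matrix.conjTranspose_conjTranspose]
  have hYYfrob : (Y * Yᴴ).frob ^ 2 ≤ t := by
    rw [frob_sq, hYYherm]
    have hsq : (Y * Yᴴ) * (Y * Yᴴ) =
        B.mcpow a * (A.mcpow h * (B.mcpow h * (A.mcpow h * B.mcpow c))) := by
      rw [hYY]
      simp only [Matrix.mul_assoc]
      rw [pow_pow_assoc hBh, eca]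
    rw [hsq, Matrix.trace_mul_comm]
    have hre : A.mcpow h * (B.mcpow h * (A.mcpow h * B.mcpow c)) * B.mcpow a =
        W * W := by
      rw [hW]
      simp only [Matrix.mul_assoc]
      rw [mcpow_mul_mcpow hBh, eca]
    rw [hre]
    have hcs := cs_re Wᴴ W
    rw [Matrix.conjTranspose_conjTranspose] at hcs
    calc (W * W).trace.re ≤ Wᴴ.frob * W.frob := hcs
      _ = t := by rw [frob_conjTranspose, ← pow_two, hWfrob]
  -- sqrt bounds
  have hXXle : (Xᴴ * X).frob ≤ Real.sqrt t := by
    rw [← Real.sqrt_sq (frob_nonneg (Xᴴ * X))]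
    exact Real.sqrt_le_sqrt hXXfrob
  have hYYle : (Y * Yᴴ).frob ≤ Real.sqrt t := by
    rw [← Real.sqrt_sq (frob_nonneg (Y * Yᴴ))]
    exact Real.sqrt_le_sqrt hYYfrob
  -- XY frob bound
  have hXYfrob : (X * Y).frob ^ 2 ≤ t := by
    rw [frob_sq, Matrix.conjTranspose_mul]
    have h1 : Yᴴ * Xᴴ * (X * Y) = Yᴴ * (Xᴴ * (X * Y)) := by
      simp only [Matrix.mul_assoc]
    rw [h1, Matrix.trace_mul_comm]
    have h2 : Xᴴ * (X * Y) * Yᴴ = (Xᴴ * X)ᴴ * (Y * Yᴴ) := by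
      rw [hXXherm]
      simp only [Matrix.mul_assoc]
    rw [h2]
    calc ((Xᴴ * X)ᴴ * (Y * Yᴴ)).trace.re ≤ (Xᴴ * X).frob * (Y * Yᴴ).frob :=
          cs_re _ _
      _ ≤ Real.sqrt t * Real.sqrt t :=
          mul_le_mul hXXle hYYle (frob_nonneg _) (Real.sqrt_nonneg _)
      _ = t := Real.mul_self_sqrt htnn
  have hXYle : (X * Y).frob ≤ Real.sqrt t := by
    rw [← Real.sqrt_sq (frob_nonneg (X * Y))]
    exact Real.sqrt_le_sqrt hXYfrob
  -- main trace identity (uses cyclicity)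
  have hprod : X * Y * W =
      B.mcpow c * (A.mcpow a * (B.mcpow a * (A.mcpow b * B.mcpow h))) := by
    rw [hX, hY, hW]
    simp only [Matrix.mul_assoc]
    rw [pow_pow_assoc hAh c h, ech]
  have hback : A.mcpow a * (B.mcpow a * (A.mcpow b * B.mcpow h)) * B.mcpow c =
      A.mcpow a * B.mcpow a * A.mcpow b * B.mcpow b := by
    simp only [Matrix.mul_assoc]
    rw [mcpow_mul_mcpow hBh h c, ehc]
  have htr : (A.mcpow a * B.mcpow a * A.mcpow b * B.mcpow b).trace =
      (X * Y * W).trace := by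
    rw [hprod, ← hback, Matrix.trace_mul_comm]
  -- finish
  rw [htr]
  have hcsfin := cs (X * Y)ᴴ W
  rw [Matrix.conjTranspose_conjTranspose, frob_conjTranspose] at hcsfin
  calc (X * Y * W).trace.re ≤ ‖(X * Y * W).trace‖ := Complex.re_le_norm _
    _ ≤ (X * Y).frob * W.frob := hcsfin
    _ ≤ Real.sqrt t * Real.sqrt t := by
        apply mul_le_mul hXYle _ (frob_nonneg _) (Real.sqrt_nonneg _)
        rw [← Real.sqrt_sq (frob_nonneg W), hWfrob]
    _ = t := Real.mul_self_sqrt htnn
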